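/- (Clifford-type theorem for difference modules) Let M be an irreducible D_s-module whose restriction to D_t (for s | t) decomposes into isotypic components M↓^s_t = M_1^{n_1} ⊕ ⋯ ⊕ M_r^{n_r} with the M_i pairwise non-isomorphic irreducible D_t-modules. Then multiplication by Φ^s permutes the isotypic components M_i^{n_i} transitively; consequently n_1 = ⋯ = n_r and dim_F M_1 = ⋯ = dim_F M_r. -/

import Mathlib

/-- A subspace `p` is stable under the (semilinear) action `g`. -/
def DiffStab {F V : Type*} [Field F] [AddCommGroup V] [Module F V]
    (g : V → V) (p : Submodule F V) : Prop :=
  ∀ x ∈ p, g x ∈ p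

/-- `p` is an irreducible difference submodule for the action `g`. -/
def DiffIrred {F V : Type*} [Field F] [AddCommGroup V] [Module F V]
    (g : V → V) (p : Submodule F V) : Prop :=
  p ≠ ⊥ ∧ ∀ q ≤ p, DiffStab g q → q = ⊥ ∨ q = p

/-- Two difference submodules `p`, `q` (for the action `g`) are isomorphic:
there is an `F`-linear equivalence `p ≃ q` commuting with `g`. -/
def DiffIso {F V : Type*} [Field F] [AddCommGroup V] [Module F V]
    (g : V → V) (p q : Submodule F V) : Prop :=
  ∃ e : p ≃ₗ[F] q, ∀ (x : V) (hx : x ∈ p) (hgx : g x ∈ p),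
    ((e ⟨g x, hgx⟩ : q) : V) = g ((e ⟨x, hx⟩ : q) : V)

attribute [local instance] RingHomInvPair.of_ringEquiv
attribute [local instance] RingHomInvPair.of_ringEquiv_symm

namespace CliffordAux
variable {F V : Type*} [Field F] [AddCommGroup V] [Module F V]

lemma iterate_add (A : V ≃+ V) (k : ℕ) (x y : V) :
    (⇑A)^[k] (x + y) = (⇑A)^[k] x + (⇑A)^[k] y := by
  induction k with
  | zero => simp
  | succ k ih => simp [Function.iterate_succ_apply', ih]

lemma iterate_smul (ψ : F ≃+* F) (A : V ≃+ V)
    (hA : ∀ (f : F) (v : V), A (f • v) = ψ f • A v) (k : ℕ) (f : F) (v : V) :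
    (⇑A)^[k] (f • v) = (ψ ^ k) f • (⇑A)^[k] v := by
  induction k with
  | zero => rfl
  | succ k ih =>
      rw [Function.iterate_succ_apply', Function.iterate_succ_apply', ih, hA,
        pow_succ']
      rfl

/-- `A` as a `ψ`-semilinear equivalence. -/
def Amap (ψ : F ≃+* F) (A : V ≃+ V)
    (hA : ∀ (f : F) (v : V), A (f • v) = ψ f • A v) :
    V ≃ₛₗ[(ψ : F →+* F)] V :=
  { A with map_smul' := hA }

@[simp] lemma Amap_apply (ψ : F ≃+* F) (A : V ≃+ V) (hA) (x : V) :
    Amap ψ A hA x = A x := rfl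

/-- `A^[k]` as a `ψ^k`-semilinear equivalence. -/
def Bmap (ψ : F ≃+* F) (A : V ≃+ V)
    (hA : ∀ (f : F) (v : V), A (f • v) = ψ f • A v) (k : ℕ) :
    V ≃ₛₗ[((ψ ^ k : F ≃+* F) : F →+* F)] V where
  toFun := (⇑A)^[k]
  invFun := (⇑A.symm)^[k]
  left_inv := A.left_inv.iterate k
  right_inv := A.right_inv.iterate k
  map_add' := iterate_add A k
  map_smul' := iterate_smul ψ A hA k

@[simp] lemma Bmap_apply (ψ : F ≃+* F) (A : V ≃+ V) (hA) (k : ℕ) (x : V) :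
    Bmap ψ A hA k x = (⇑A)^[k] x := rfl


section Transport

variable {σ : F ≃+* F} (e : V ≃ₛₗ[(σ : F →+* F)] V) {g : V → V}

lemma comm_symm (hcomm : ∀ x, g (e x) = e (g x)) (x : V) :
    g (e.symm x) = e.symm (g x) := by
  apply e.injective
  rw [← hcomm, e.apply_symm_apply, e.apply_symm_apply]

lemma mem_map_iff (p : Submodule F V) (x : V) :
    x ∈ p.map e.toLinearMap ↔ e.symm x ∈ p := by
  constructor
  · rintro ⟨y, hy, rfl⟩; simpa using hy
  · intro h; exact ⟨e.symm x, h, by simp⟩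

lemma map_map_symm (p : Submodule F V) :
    (p.map e.toLinearMap).map e.symm.toLinearMap = p := by
  ext x
  erw [mem_map_iff, mem_map_iff]
  erw [LinearEquiv.symm_symm, LinearEquiv.symm_apply_apply]

lemma map_symm_map (p : Submodule F V) :
    (p.map e.symm.toLinearMap).map e.toLinearMap = p := by
  ext x
  rw [mem_map_iff]
  erw [mem_map_iff]
  erw [LinearEquiv.symm_symm, LinearEquiv.apply_symm_apply]

lemma symm_smul (f : F) (v : V) : e.symm (f • v) = σ.symm f • e.symm v := by
  apply e.injective
  rw [e.apply_symm_apply, map_smulₛₗ, e.apply_symm_apply]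
  simp

lemma stab_map (hcomm : ∀ x, g (e x) = e (g x)) {p : Submodule F V}
    (hp : DiffStab g p) : DiffStab g (p.map e.toLinearMap) := by
  rintro x ⟨y, hy, rfl⟩
  exact ⟨g y, hp y hy, (hcomm y).symm⟩

lemma map_ne_bot {p : Submodule F V} (hp : p ≠ ⊥) :
    p.map e.toLinearMap ≠ ⊥ := by
  intro h
  apply hp
  rw [← map_map_symm e p, h, Submodule.map_bot]

lemma irred_map (hcomm : ∀ x, g (e x) = e (g x)) {p : Submodule F V}
    (hp : DiffIrred g p) : DiffIrred g (p.map e.toLinearMap) := by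
  refine ⟨map_ne_bot e hp.1, fun q hq hqs => ?_⟩
  have h1 : q.map e.symm.toLinearMap ≤ p := by
    have := Submodule.map_mono (f := e.symm.toLinearMap) hq
    rwa [map_map_symm] at this
  have h2 : DiffStab g (q.map e.symm.toLinearMap) := by
    rintro x ⟨y, hy, rfl⟩
    exact ⟨g y, hqs y hy, (comm_symm e hcomm y).symm⟩
  rcases hp.2 _ h1 h2 with h | h
  · left
    rw [← map_symm_map e q, h, Submodule.map_bot]
  · right
    rw [← map_symm_map e q, h]

end Transport

section Iso

variable {g : V → V}

lemma diffIso_symm {p q : Submodule F V} (hp : DiffStab g p)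
    (h : DiffIso g p q) : DiffIso g q p := by
  obtain ⟨e0, he⟩ := h
  refine ⟨e0.symm, fun y hy hgy => ?_⟩
  set x : p := e0.symm ⟨y, hy⟩ with hxdef
  have hgx : g (x : V) ∈ p := hp _ x.2
  have key : e0 ⟨g (x : V), hgx⟩ = ⟨g y, hgy⟩ := by
    apply Subtype.ext
    rw [he (x : V) x.2 hgx]
    congr 1
    have : (⟨(x : V), x.2⟩ : p) = x := rfl
    rw [this, hxdef, LinearEquiv.apply_symm_apply]
  have : e0.symm ⟨g y, hgy⟩ = ⟨g (x : V), hgx⟩ := by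
    rw [← key, LinearEquiv.symm_apply_apply]
  rw [this]

lemma diffIso_trans {p q s : Submodule F V}
    (h1 : DiffIso g p q) (h2 : DiffIso g q s) : DiffIso g p s := by
  obtain ⟨e1, he1⟩ := h1
  obtain ⟨e2, he2⟩ := h2
  refine ⟨e1.trans e2, fun x hx hgx => ?_⟩
  set y : q := e1 ⟨x, hx⟩ with hydef
  have hmem : g (y : V) ∈ q := by
    have := (e1 ⟨g x, hgx⟩).2
    rwa [he1 x hx hgx] at this
  have key : e1 ⟨g x, hgx⟩ = ⟨g (y : V), hmem⟩ := Subtype.ext (he1 x hx hgx)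
  have : (⟨(y : V), y.2⟩ : q) = y := rfl
  simp only [LinearEquiv.trans_apply]
  rw [key, he2 (y : V) y.2 hmem, this]

end Iso

section Conj

variable {σ : F ≃+* F} (e : V ≃ₛₗ[(σ : F →+* F)] V) {g : V → V}

/-- Conjugation of a `DiffIso` by a semilinear equivalence commuting with `g`. -/
lemma iso_map (hcomm : ∀ x, g (e x) = e (g x)) {p q : Submodule F V}
    (hp : DiffStab g p) (h : DiffIso g p q) :
    DiffIso g (p.map e.toLinearMap) (q.map e.toLinearMap) := by
  obtain ⟨e0, he⟩ := h
  have memp : ∀ x : p.map e.toLinearMap, e.symm (x : V) ∈ p :=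
    fun x => (mem_map_iff e p (x : V)).1 x.2
  have memq : ∀ y : q.map e.toLinearMap, e.symm (y : V) ∈ q :=
    fun y => (mem_map_iff e q (y : V)).1 y.2
  refine ⟨{ toFun := fun x => ⟨e ↑(e0 ⟨e.symm (x : V), memp x⟩),
              (mem_map_iff e q _).2 (by simp)⟩
            invFun := fun y => ⟨e ↑(e0.symm ⟨e.symm (y : V), memq y⟩),
              (mem_map_iff e p _).2 (by simp)⟩
            map_add' := ?_
            map_smul' := ?_
            left_inv := ?_
            right_inv := ?_ }, ?_⟩
  · intro x y
    apply Subtype.ext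
    show e ↑(e0 ⟨e.symm ((x : V) + (y : V)), _⟩) =
      e ↑(e0 ⟨e.symm (x : V), memp x⟩) + e ↑(e0 ⟨e.symm (y : V), memp y⟩)
    have h1 : (⟨e.symm ((x : V) + (y : V)), memp (x + y)⟩ : p) =
        ⟨e.symm (x : V), memp x⟩ + ⟨e.symm (y : V), memp y⟩ :=
      Subtype.ext (by simp)
    rw [h1, map_add e0]
    simp
  · intro f x
    apply Subtype.ext
    show e ↑(e0 ⟨e.symm (f • (x : V)), _⟩) = f • e ↑(e0 ⟨e.symm (x : V), memp x⟩)
    have h1 : (⟨e.symm (f • (x : V)), memp (f • x)⟩ : p) =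
        σ.symm f • ⟨e.symm (x : V), memp x⟩ :=
      Subtype.ext (by simp [symm_smul])
    rw [h1, map_smul e0]
    have h2 : (↑(σ.symm f • e0 ⟨e.symm (x : V), memp x⟩) : V) =
        σ.symm f • ↑(e0 ⟨e.symm (x : V), memp x⟩) := rfl
    rw [h2, map_smulₛₗ]
    simp
  · intro x
    apply Subtype.ext
    show e ↑(e0.symm ⟨e.symm (e ↑(e0 ⟨e.symm (x : V), memp x⟩)), _⟩) = (x : V)
    simp
  · intro y
    apply Subtype.ext
    show e ↑(e0 ⟨e.symm (e ↑(e0.symm ⟨e.symm (y : V), memq y⟩)), _⟩) = (y : V)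
    simp
  · intro x hx hgx
    show e ↑(e0 ⟨e.symm (g x), _⟩) = g (e ↑(e0 ⟨e.symm x, _⟩))
    have hsx : e.symm x ∈ p := (mem_map_iff e p x).1 hx
    have hsgx : e.symm (g x) ∈ p := (mem_map_iff e p (g x)).1 hgx
    have hgsx : g (e.symm x) ∈ p := by
      rwa [comm_symm e hcomm x]
    have h1 : (⟨e.symm (g x), hsgx⟩ : p) = ⟨g (e.symm x), hgsx⟩ :=
      Subtype.ext (comm_symm e hcomm x).symm
    rw [h1, he (e.symm x) hsx hgsx, hcomm]

end Conj


section Proj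

variable {ι : Type*} [Fintype ι] [DecidableEq ι]
variable {P : ι → Submodule F V} (h : DirectSum.IsInternal P)

/-- The projection onto the `i`-th factor of an internal direct sum, as a map `V →ₗ[F] V`. -/
noncomputable def proj (i : ι) : V →ₗ[F] V :=
  (P i).subtype ∘ₗ (DirectSum.component F ι (fun i => (P i : Type _)) i) ∘ₗ
    (LinearEquiv.ofBijective (DirectSum.coeLinearMap P) h).symm.toLinearMap

lemma proj_mem (i : ι) (x : V) : proj h i x ∈ P i := by
  simp only [proj, LinearMap.coe_comp, Function.comp_apply, Submodule.coe_subtype]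
  exact Submodule.coe_mem _

lemma proj_of_mem {i : ι} {x : V} (hx : x ∈ P i) : proj h i x = x := by
  simp only [proj, LinearMap.coe_comp, Function.comp_apply, Submodule.coe_subtype,
    LinearEquiv.coe_coe]
  rw [← DirectSum.apply_eq_component, h.ofBijective_coeLinearMap_of_mem hx]

lemma proj_of_mem_ne {i j : ι} (hij : i ≠ j) {x : V} (hx : x ∈ P i) :
    proj h j x = 0 := by
  simp only [proj, LinearMap.coe_comp, Function.comp_apply, Submodule.coe_subtype,
    LinearEquiv.coe_coe]
  rw [← DirectSum.apply_eq_component, h.ofBijective_coeLinearMap_of_mem_ne hij hx]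
  rfl

lemma sum_proj (x : V) : ∑ i, proj h i x = x := by
  have hE : DirectSum.coeLinearMap P
      ((LinearEquiv.ofBijective (DirectSum.coeLinearMap P) h).symm x) = x := by
    exact (LinearEquiv.ofBijective (DirectSum.coeLinearMap P) h).apply_symm_apply x
  set d := (LinearEquiv.ofBijective (DirectSum.coeLinearMap P) h).symm x with hd
  have hdsum : d = ∑ i, DirectSum.of (fun i => (P i : Type _)) i (d i) :=
    (DirectSum.sum_univ_of d).symm
  calc ∑ i, proj h i x = ∑ i, ((d i : V)) := rfl
    _ = x := by
        rw [← hE]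
        conv_rhs => rw [hdsum]
        rw [map_sum]
        exact Finset.sum_congr rfl fun i _ => (DirectSum.coeLinearMap_of P i (d i)).symm

variable {g : V → V} (hg : ∀ x y, g (x + y) = g x + g y)
include hg

lemma g_zero : g 0 = 0 := by
  have h0 : g 0 = g 0 + g 0 := by rw [← hg]; simp
  exact (left_eq_add.mp h0)

lemma proj_comm (hstab : ∀ i, DiffStab g (P i)) (i : ι) (x : V) :
    proj h i (g x) = g (proj h i x) := by
  classical
  have hx : g x = ∑ j, g (proj h j x) := by
    conv_lhs => rw [← sum_proj h x]
    exact map_sum (AddMonoidHom.mk' g hg) _ _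
  rw [hx, map_sum]
  rw [Finset.sum_eq_single i]
  · exact proj_of_mem h (hstab i _ (proj_mem h i x))
  · intro j _ hji
    exact proj_of_mem_ne h hji (hstab j _ (proj_mem h j x))
  · intro hi
    exact absurd (Finset.mem_univ i) hi

omit hg in lemma map_proj_le (U : Submodule F V) (i : ι) : U.map (proj h i) ≤ P i := by
  rintro x ⟨y, hy, rfl⟩
  exact proj_mem h i y

lemma exists_iso_of_proj_ne_bot (hstab : ∀ i, DiffStab g (P i))
    (hirrP : ∀ i, DiffIrred g (P i)) {U : Submodule F V}
    (hU : DiffStab g U) (hUirr : DiffIrred g U) (i : ι)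
    (hne : U.map (proj h i) ≠ ⊥) : DiffIso g U (P i) := by
  -- the image is all of `P i`
  have hTstab : DiffStab g (U.map (proj h i)) := by
    rintro x ⟨y, hy, rfl⟩
    exact ⟨g y, hU y hy, (proj_comm h hg hstab i y)⟩
  have hT : U.map (proj h i) = P i := by
    rcases (hirrP i).2 _ (map_proj_le h U i) hTstab with h' | h'
    · exact absurd h' hne
    · exact h'
  -- the kernel is trivial
  have hKstab : DiffStab g (U ⊓ LinearMap.ker (proj h i)) := by
    rintro x ⟨hxU, hxK⟩
    refine ⟨hU x hxU, ?_⟩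
    have hxK' : proj h i x = 0 := hxK
    have : proj h i (g x) = 0 := by
      rw [proj_comm h hg hstab i x, hxK', g_zero hg]
    exact this
  have hK : U ⊓ LinearMap.ker (proj h i) = ⊥ := by
    rcases hUirr.2 _ inf_le_left hKstab with h' | h'
    · exact h'
    · exfalso
      apply hne
      rw [Submodule.eq_bot_iff]
      rintro x ⟨y, hy, rfl⟩
      have hyk : y ∈ U ⊓ LinearMap.ker (proj h i) := by rw [h']; exact hy
      exact hyk.2
  -- build the isomorphism
  have hres : ∀ x ∈ U, proj h i x ∈ P i := fun x _ => proj_mem h i x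
  set φ : U →ₗ[F] P i := (proj h i).restrict hres with hφ
  have hinj : Function.Injective φ := by
    intro x y hxy
    have hxy' : proj h i ((x : V) - (y : V)) = 0 := by
      have := congrArg (Subtype.val) hxy
      simp only [hφ, LinearMap.restrict_apply] at this
      rw [map_sub, this, sub_self]
    have hmem : ((x : V) - (y : V)) ∈ U ⊓ LinearMap.ker (proj h i) :=
      ⟨U.sub_mem x.2 y.2, hxy'⟩
    rw [hK] at hmem
    have : (x : V) - (y : V) = 0 := hmem
    exact Subtype.ext (sub_eq_zero.mp this)
  have hsurj : Function.Surjective φ := by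
    intro y
    have : (y : V) ∈ U.map (proj h i) := by rw [hT]; exact y.2
    obtain ⟨z, hz, hzy⟩ := this
    exact ⟨⟨z, hz⟩, Subtype.ext (by simpa [hφ, LinearMap.restrict_apply] using hzy)⟩
  refine ⟨LinearEquiv.ofBijective φ ⟨hinj, hsurj⟩, fun x hx hgx => ?_⟩
  show proj h i (g x) = g (proj h i x)
  exact proj_comm h hg hstab i x

omit hg in lemma le_biSup_proj {U : Submodule F V} :
    U ≤ ⨆ i ∈ {i | U.map (proj h i) ≠ ⊥}, P i := by
  intro x hx
  rw [← sum_proj h x]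
  apply Submodule.sum_mem
  intro j _
  by_cases hj : U.map (proj h j) ≠ ⊥
  · exact Submodule.mem_iSup_of_mem j (Submodule.mem_iSup_of_mem hj (proj_mem h j x))
  · push_neg at hj
    have : proj h j x ∈ U.map (proj h j) := ⟨x, hx, rfl⟩
    rw [hj] at this
    simp only [Submodule.mem_bot] at this
    rw [this]
    exact Submodule.zero_mem _

omit hg in lemma exists_proj_ne_bot {U : Submodule F V} (hU : U ≠ ⊥) :
    ∃ i, U.map (proj h i) ≠ ⊥ := by
  obtain ⟨x, hxU, hx0⟩ := Submodule.exists_mem_ne_zero_of_ne_bot hU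
  by_contra hall
  push_neg at hall
  apply hx0
  rw [← sum_proj h x]
  apply Finset.sum_eq_zero
  intro j _
  have : proj h j x ∈ U.map (proj h j) := ⟨x, hxU, rfl⟩
  rw [hall j] at this
  simpa using this

end Proj

section Finrank

variable [FiniteDimensional F V]

lemma finrank_biSup {ι : Type*} [DecidableEq ι] {P : ι → Submodule F V}
    (hind : iSupIndep P) (s : Finset ι) :
    Module.finrank F ↥(⨆ i ∈ s, P i) = ∑ i ∈ s, Module.finrank F (P i) := by
  classical
  induction s using Finset.induction_on with
  | empty => simp
  | insert a s ha ih =>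
      rw [Finset.sum_insert ha, ← ih]
      rw [Finset.iSup_insert]
      have hdisj : Disjoint (P a) (⨆ i ∈ s, P i) := by
        have := hind.disjoint_biSup (x := a) (y := (↑s : Set ι))
          (by simpa using ha)
        simpa using this
      have := Submodule.finrank_sup_add_finrank_inf_eq (P a) (⨆ i ∈ s, P i)
      rw [disjoint_iff.mp hdisj, finrank_bot, add_zero] at this
      exact this

lemma finrank_iSup {ι : Type*} [Fintype ι] [DecidableEq ι] {P : ι → Submodule F V}
    (hind : iSupIndep P) :
    Module.finrank F ↥(⨆ i, P i) = ∑ i, Module.finrank F (P i) := by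
  have : (⨆ i, P i) = ⨆ i ∈ (Finset.univ : Finset ι), P i := by simp
  rw [this, finrank_biSup hind]

end Finrank

end CliffordAux

/-- Clifford-type theorem for difference modules.  Let `(V, A)` be an irreducible
finite-dimensional `D_s`-module (`ψ = φ^s`, `A` = `ψ`-semilinear action of `Φ^s`),
`s ∣ t`, `k = t/s`, so the restriction to `D_t` is `(V, A^k)`.  Suppose
`V = M₁^{n₁} ⊕ ⋯ ⊕ M_r^{n_r}` is the isotypic decomposition of the restriction:
`Q j` is the sum of an independent family of `n j` mutually isomorphic irreducible
`D_t`-submodules `W j a`, and submodules from different components are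
non-isomorphic.  Then multiplication by `Φ^s` (i.e. `A`) permutes the isotypic
components `Q j` transitively; consequently `n₁ = ⋯ = n_r` and
`dim_F M₁ = ⋯ = dim_F M_r`. -/
theorem clifford_difference {F V : Type*} [Field F]
    [AddCommGroup V] [Module F V] [FiniteDimensional F V]
    (ψ : F ≃+* F) (A : V ≃+ V)
    (hA : ∀ (f : F) (v : V), A (f • v) = ψ f • A v)
    (hnt : Nontrivial V)
    (hirr : ∀ p : Submodule F V, DiffStab ⇑A p → p = ⊥ ∨ p = ⊤)
    (k : ℕ) (hk : 0 < k)
    (r : ℕ) (hr : 0 < r) (Q : Fin r → Submodule F V)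
    (hQind : iSupIndep Q) (hQtop : iSup Q = ⊤)
    (hQstab : ∀ j, DiffStab ((⇑A)^[k]) (Q j))
    (n : Fin r → ℕ) (hn : ∀ j, 0 < n j)
    (W : (j : Fin r) → Fin (n j) → Submodule F V)
    (hWle : ∀ j a, W j a ≤ Q j)
    (hWstab : ∀ j a, DiffStab ((⇑A)^[k]) (W j a))
    (hWirr : ∀ j a, DiffIrred ((⇑A)^[k]) (W j a))
    (hWind : ∀ j, iSupIndep (W j))
    (hWsup : ∀ j, iSup (W j) = Q j)
    (hWiso : ∀ j a b, DiffIso ((⇑A)^[k]) (W j a) (W j b))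
    (hcross : ∀ j j', j ≠ j' → ∀ a b, ¬ DiffIso ((⇑A)^[k]) (W j a) (W j' b)) :
    (∀ j, ∃ j', ⇑A '' (Q j : Set V) = (Q j' : Set V)) ∧
    (∀ j j', ∃ m : ℕ, (⇑A)^[m] '' (Q j : Set V) = (Q j' : Set V)) ∧
    (∀ j j', n j = n j') ∧
    (∀ j j' a b, Module.finrank F (W j a) = Module.finrank F (W j' b)) := by
  classical
  open CliffordAux in
  -- notation
  set g : V → V := (⇑A)^[k] with hgdef
  have hg_add : ∀ x y : V, g (x + y) = g x + g y := CliffordAux.iterate_add A k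
  set eA : V ≃ₛₗ[(ψ : F →+* F)] V := CliffordAux.Amap ψ A hA with heA
  have hcommA : ∀ x : V, g (eA x) = eA (g x) := by
    intro x
    show (⇑A)^[k] (A x) = A ((⇑A)^[k] x)
    rw [← Function.iterate_succ_apply, Function.iterate_succ_apply']
  -- the fine decomposition, indexed by a sigma type
  set P : ((j : Fin r) × Fin (n j)) → Submodule F V := fun i => W i.1 i.2 with hP
  have hPind : iSupIndep P := by
    rintro ⟨j, a⟩
    set X := ⨆ a', ⨆ (_ : a' ≠ a), W j a' with hX
    set Y := ⨆ j', ⨆ (_ : j' ≠ j), Q j' with hY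
    have hXQ : X ≤ Q j := iSup_le fun a' => iSup_le fun _ => hWle j a'
    have h1 : (⨆ i', ⨆ (_ : i' ≠ (⟨j, a⟩ : (j : Fin r) × Fin (n j))), P i') ≤ X ⊔ Y := by
      apply iSup_le; rintro ⟨j', a'⟩; apply iSup_le; intro hne
      by_cases hj : j' = j
      · subst hj
        have ha : a' ≠ a := fun h => hne (by rw [h])
        exact le_trans (le_iSup₂ (f := fun a'' (_ : a'' ≠ a) => W j' a'') a' ha) le_sup_left
      · exact le_trans (le_trans (hWle j' a')
          (le_iSup₂ (f := fun j'' (_ : j'' ≠ j) => Q j'') j' hj)) le_sup_right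
    have h3 : (X ⊔ Y) ⊓ Q j = X := by
      rw [sup_inf_assoc_of_le Y hXQ, inf_comm Y (Q j), (hQind j).eq_bot, sup_bot_eq]
    have h2 : W j a ⊓ (X ⊔ Y) = ⊥ := by
      have hw : W j a ⊓ (X ⊔ Y) = W j a ⊓ ((X ⊔ Y) ⊓ Q j) := by
        rw [inf_comm (X ⊔ Y) (Q j), ← inf_assoc, inf_eq_left.mpr (hWle j a)]
      rw [hw, h3, hX, (hWind j a).eq_bot]
    have hfin : P ⟨j, a⟩ ⊓ (⨆ i', ⨆ (_ : i' ≠ (⟨j, a⟩ : (j : Fin r) × Fin (n j))), P i') ≤ ⊥ := by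
      refine le_trans (inf_le_inf_left _ h1) ?_
      exact le_of_eq h2
    exact disjoint_iff.mpr (le_bot_iff.mp hfin)
  have hPtop : iSup P = ⊤ := by
    rw [iSup_sigma]
    have : (⨆ j, ⨆ a, P ⟨j, a⟩) = ⨆ j, Q j := iSup_congr hWsup
    rw [this, hQtop]
  have hint : DirectSum.IsInternal P :=
    DirectSum.isInternal_submodule_of_iSupIndep_of_iSup_eq_top hPind hPtop
  have hPstab : ∀ i, DiffStab g (P i) := fun i => hWstab i.1 i.2
  have hPirr : ∀ i, DiffIrred g (P i) := fun i => hWirr i.1 i.2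
  -- every irreducible stable submodule sits inside one isotypic component
  have F1 : ∀ U : Submodule F V, DiffStab g U → DiffIrred g U →
      ∃ j : Fin r, U ≤ Q j ∧ ∃ a, DiffIso g U (W j a) := by
    intro U hUs hUi
    obtain ⟨i₀, hi₀⟩ := CliffordAux.exists_proj_ne_bot hint (U := U) hUi.1
    have hiso₀ : DiffIso g U (P i₀) :=
      CliffordAux.exists_iso_of_proj_ne_bot hint hg_add hPstab hPirr hUs hUi i₀ hi₀
    refine ⟨i₀.1, ?_, ⟨i₀.2, hiso₀⟩⟩
    refine le_trans (CliffordAux.le_biSup_proj hint) ?_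
    apply iSup_le; intro i; apply iSup_le; intro hi
    have hisoi : DiffIso g U (P i) :=
      CliffordAux.exists_iso_of_proj_ne_bot hint hg_add hPstab hPirr hUs hUi i hi
    have hiso : DiffIso g (P i₀) (P i) :=
      CliffordAux.diffIso_trans (CliffordAux.diffIso_symm hUs hiso₀) hisoi
    have hji : i.1 = i₀.1 := by
      by_contra hne
      exact hcross i₀.1 i.1 (fun hh => hne hh.symm) i₀.2 i.2 hiso
    exact le_trans (hWle i.1 i.2) (le_of_eq (by rw [hji]))
  -- transport along A
  have hmapstab : ∀ p : Submodule F V, DiffStab g p →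
      DiffStab g (p.map eA.toLinearMap) := fun p hp => CliffordAux.stab_map eA hcommA hp
  have hmapirr : ∀ p : Submodule F V, DiffIrred g p →
      DiffIrred g (p.map eA.toLinearMap) := fun p hp => CliffordAux.irred_map eA hcommA hp
  set a0 : ∀ j, Fin (n j) := fun j => ⟨0, hn j⟩ with ha0
  -- the permutation σ of the components
  have hσex : ∀ j, ∃ j', ∀ a, (W j a).map eA.toLinearMap ≤ Q j' ∧
      ∃ c, DiffIso g ((W j a).map eA.toLinearMap) (W j' c) := by
    intro j
    obtain ⟨j', hle, c, hiso⟩ := F1 ((W j (a0 j)).map eA.toLinearMap)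
      (hmapstab _ (hWstab j (a0 j))) (hmapirr _ (hWirr j (a0 j)))
    refine ⟨j', fun a => ?_⟩
    obtain ⟨j'', hle'', c'', hiso''⟩ := F1 ((W j a).map eA.toLinearMap)
      (hmapstab _ (hWstab j a)) (hmapirr _ (hWirr j a))
    have hconj : DiffIso g ((W j (a0 j)).map eA.toLinearMap) ((W j a).map eA.toLinearMap) :=
      CliffordAux.iso_map eA hcommA (hWstab j (a0 j)) (hWiso j (a0 j) a)
    have hisoWW : DiffIso g (W j' c) (W j'' c'') :=
      CliffordAux.diffIso_trans
        (CliffordAux.diffIso_symm (hmapstab _ (hWstab j (a0 j))) hiso)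
        (CliffordAux.diffIso_trans hconj hiso'')
    have hj : j' = j'' := by
      by_contra hne
      exact hcross j' j'' hne c c'' hisoWW
    cases hj
    exact ⟨hle'', c'', hiso''⟩
  choose σ hσspec using hσex
  have hmapQ_le : ∀ j, (Q j).map eA.toLinearMap ≤ Q (σ j) := by
    intro j
    rw [← hWsup j, Submodule.map_iSup]
    exact iSup_le fun a => (hσspec j a).1
  have hQne : ∀ j, Q j ≠ ⊥ := by
    intro j hbot
    have hle := hWle j (a0 j)
    rw [hbot, le_bot_iff] at hle
    exact (hWirr j (a0 j)).1 hle
  have hmapTop : (⊤ : Submodule F V).map eA.toLinearMap = ⊤ := by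
    rw [Submodule.map_top, LinearMap.range_eq_top]
    exact eA.surjective
  have hle2 : ∀ (Pf : Fin r → Submodule F V) (cond : Fin r → Prop) (i : Fin r),
      cond i → Pf i ≤ ⨆ i', ⨆ (_ : cond i'), Pf i' :=
    fun Pf cond i hi => le_iSup₂ (f := fun i' (_ : cond i') => Pf i') i hi
  have hσsurj : Function.Surjective σ := by
    intro j'
    by_contra hne
    push_neg at hne
    have h2 : (⊤ : Submodule F V) ≤ ⨆ i, ⨆ (_ : i ≠ j'), Q i := by
      rw [← hmapTop, ← hQtop, Submodule.map_iSup]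
      exact iSup_le fun j => le_trans (hmapQ_le j) (hle2 Q (fun i => i ≠ j') (σ j) (hne j))
    have hdisj := (hQind j').eq_bot
    have : Q j' ≤ ⊥ := by
      rw [← hdisj]
      exact le_inf le_rfl (le_trans le_top h2)
    exact hQne j' (le_bot_iff.mp this)
  have hσinj : Function.Injective σ := Finite.injective_iff_surjective.mpr hσsurj
  have hmapQ : ∀ j, (Q j).map eA.toLinearMap = Q (σ j) := by
    intro j
    refine le_antisymm (hmapQ_le j) ?_
    have hsup : (⨆ i, (Q i).map eA.toLinearMap) = ⊤ := by
      rw [← Submodule.map_iSup, hQtop, hmapTop]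
    have hsplit : (⊤ : Submodule F V) ≤
        (Q j).map eA.toLinearMap ⊔ ⨆ i, ⨆ (_ : i ≠ j), (Q i).map eA.toLinearMap := by
      rw [← hsup]
      apply iSup_le; intro i
      by_cases hij : i = j
      · subst hij; exact le_sup_left
      · exact le_trans (hle2 (fun i => (Q i).map eA.toLinearMap) (fun i => i ≠ j) i hij) le_sup_right
    have hrest : (⨆ i, ⨆ (_ : i ≠ j), (Q i).map eA.toLinearMap) ≤
        ⨆ i, ⨆ (_ : i ≠ σ j), Q i := by
      apply iSup_le; intro i; apply iSup_le; intro hij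
      exact le_trans (hmapQ_le i) (hle2 Q (fun i' => i' ≠ σ j) (σ i) (fun hh => hij (hσinj hh)))
    have h3 : Q (σ j) = Q (σ j) ⊓
        ((Q j).map eA.toLinearMap ⊔ ⨆ i, ⨆ (_ : i ≠ j), (Q i).map eA.toLinearMap) :=
      (inf_eq_left.mpr (le_trans le_top hsplit)).symm
    have hmod : ((Q j).map eA.toLinearMap ⊔
          ⨆ i, ⨆ (_ : i ≠ j), (Q i).map eA.toLinearMap) ⊓ Q (σ j) =
        (Q j).map eA.toLinearMap ⊔
          ((⨆ i, ⨆ (_ : i ≠ j), (Q i).map eA.toLinearMap) ⊓ Q (σ j)) :=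
      sup_inf_assoc_of_le _ (hmapQ_le j)
    have hbot : (⨆ i, ⨆ (_ : i ≠ j), (Q i).map eA.toLinearMap) ⊓ Q (σ j) = ⊥ := by
      rw [← le_bot_iff]
      have := (hQind (σ j)).eq_bot
      calc (⨆ i, ⨆ (_ : i ≠ j), (Q i).map eA.toLinearMap) ⊓ Q (σ j)
          ≤ (⨆ i, ⨆ (_ : i ≠ σ j), Q i) ⊓ Q (σ j) := inf_le_inf_right _ hrest
        _ = Q (σ j) ⊓ ⨆ i, ⨆ (_ : i ≠ σ j), Q i := inf_comm _ _
        _ = ⊥ := this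
    refine le_of_eq ?_
    calc Q (σ j) = Q (σ j) ⊓ ((Q j).map eA.toLinearMap ⊔
          ⨆ i, ⨆ (_ : i ≠ j), (Q i).map eA.toLinearMap) := h3
      _ = ((Q j).map eA.toLinearMap ⊔
          ⨆ i, ⨆ (_ : i ≠ j), (Q i).map eA.toLinearMap) ⊓ Q (σ j) := inf_comm _ _
      _ = (Q j).map eA.toLinearMap ⊔
          ((⨆ i, ⨆ (_ : i ≠ j), (Q i).map eA.toLinearMap) ⊓ Q (σ j)) := hmod
      _ = (Q j).map eA.toLinearMap ⊔ ⊥ := by rw [hbot]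
      _ = (Q j).map eA.toLinearMap := sup_bot_eq _
  -- set-level image
  have himg : ∀ j, ⇑A '' (Q j : Set V) = (Q (σ j) : Set V) := by
    intro j
    have : ((Q j).map eA.toLinearMap : Set V) = ⇑A '' (Q j : Set V) := rfl
    rw [← this, hmapQ j]
  -- iterated images
  have hiter : ∀ (m : ℕ) j, (⇑A)^[m] '' (Q j : Set V) = (Q (σ^[m] j) : Set V) := by
    intro m
    induction m with
    | zero => intro j; simp
    | succ m ih =>
        intro j
        rw [Function.iterate_succ' (⇑A) m, Set.image_comp, ih j, himg (σ^[m] j),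
          Function.iterate_succ_apply' σ]
  -- transitivity of the permutation action
  have horb : ∀ j j', ∃ m : ℕ, σ^[m] j = j' := by
    intro j
    set R : Set (Fin r) := {j' | ∃ m : ℕ, σ^[m] j = j'} with hR
    set T : Submodule F V := ⨆ i ∈ R, Q i with hT
    have hTstab : DiffStab ⇑A T := by
      intro x hx
      have hmapT : T.map eA.toLinearMap ≤ T := by
        rw [hT, Submodule.map_iSup]
        apply iSup_le; intro i
        rw [Submodule.map_iSup]
        apply iSup_le; intro hi
        obtain ⟨m, hm⟩ := hi
        rw [hmapQ i]
        refine hle2 Q (fun i' => i' ∈ R) (σ i) ?_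
        show ∃ m', σ^[m'] j = σ i
        exact ⟨m + 1, by rw [Function.iterate_succ_apply' σ, hm]⟩
      exact hmapT ⟨x, hx, rfl⟩
    have hTne : T ≠ ⊥ := by
      intro hbot
      apply hQne j
      rw [← le_bot_iff, ← hbot]
      refine hle2 Q (fun i' => i' ∈ R) j ?_
      show ∃ m', σ^[m'] j = j
      exact ⟨0, rfl⟩
    have hTtop : T = ⊤ := by
      rcases hirr T hTstab with h' | h'
      · exact absurd h' hTne
      · exact h'
    intro j'
    by_contra hn'
    have hle : T ≤ ⨆ i, ⨆ (_ : i ≠ j'), Q i := by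
      apply iSup_le; intro i; apply iSup_le; intro hi
      refine hle2 Q (fun i' => i' ≠ j') i ?_
      intro hij
      exact hn' (hij ▸ hi)
    have hQle : Q j' ≤ T := by rw [hTtop]; exact le_top
    have : Q j' ≤ ⊥ := by
      rw [← (hQind j').eq_bot]
      exact le_inf le_rfl (le_trans hQle hle)
    exact hQne j' (le_bot_iff.mp this)
  -- dimension bookkeeping
  set d : Fin r → ℕ := fun j => Module.finrank F (W j (a0 j)) with hdd
  have hd : ∀ j a, Module.finrank F (W j a) = d j := by
    intro j a
    obtain ⟨e0, -⟩ := hWiso j a (a0 j)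
    exact e0.finrank_eq
  have hQrank : ∀ j, Module.finrank F (Q j) = n j * d j := by
    intro j
    rw [← hWsup j, CliffordAux.finrank_iSup (hWind j)]
    simp only [hd j, Finset.sum_const, Finset.card_univ, Fintype.card_fin, smul_eq_mul]
  have hfr : ∀ p : Submodule F V,
      Module.finrank F (p.map eA.toLinearMap) = Module.finrank F p := by
    intro p
    have e' := eA.submoduleMap p
    have hc : ∀ (f : F) (x : p), (e'.toAddEquiv) (f • x) = ψ f • (e'.toAddEquiv) x :=
      fun f x => e'.map_smulₛₗ f x
    have hrank := rank_eq_of_equiv_equiv (R := F) (R' := F)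
      (⟨⇑ψ, map_zero ψ⟩ : ZeroHom F F) e'.toAddEquiv ψ.bijective hc
    show (Module.rank F _).toNat = (Module.rank F _).toNat
    rw [hrank]
  have hdpos : ∀ j, 0 < d j := by
    intro j
    have hne : W j (a0 j) ≠ ⊥ := (hWirr j (a0 j)).1
    have : d j ≠ 0 := fun h0 => hne (Submodule.finrank_eq_zero.mp h0)
    exact Nat.pos_of_ne_zero this
  have hstep : ∀ j, n (σ j) = n j ∧ d (σ j) = d j := by
    intro j
    have hindmap : iSupIndep (fun a => (W j a).map eA.toLinearMap) := by
      have := (hWind j).map_orderIso (Submodule.orderIsoMapComap eA)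
      exact this
    have hsupmap : (⨆ a, (W j a).map eA.toLinearMap) = Q (σ j) := by
      rw [← Submodule.map_iSup, hWsup j, hmapQ j]
    have hrk1 : Module.finrank F (Q (σ j)) = n j * d (σ j) := by
      rw [← hsupmap, CliffordAux.finrank_iSup hindmap]
      have heach : ∀ a, Module.finrank F ((W j a).map eA.toLinearMap) = d (σ j) := by
        intro a
        obtain ⟨c, hiso⟩ := (hσspec j a).2
        obtain ⟨e0, -⟩ := hiso
        rw [e0.finrank_eq, hd (σ j) c]
      simp only [heach, Finset.sum_const, Finset.card_univ, Fintype.card_fin, smul_eq_mul]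
    have hn' : n (σ j) = n j :=
      Nat.eq_of_mul_eq_mul_right (hdpos (σ j)) ((hQrank (σ j)).symm.trans hrk1)
    have hfrQ : Module.finrank F (Q (σ j)) = Module.finrank F (Q j) := by
      rw [← hmapQ j, hfr]
    have hd' : d (σ j) = d j := by
      have h1 : n j * d (σ j) = n j * d j := by
        rw [← hrk1, hfrQ, hQrank j]
      exact Nat.eq_of_mul_eq_mul_left (hn j) h1
    exact ⟨hn', hd'⟩
  have hiter_n : ∀ (m : ℕ) j, n (σ^[m] j) = n j := by
    intro m
    induction m with
    | zero => intro j; rfl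
    | succ m ih =>
        intro j
        rw [Function.iterate_succ_apply' σ, (hstep (σ^[m] j)).1, ih j]
  have hiter_d : ∀ (m : ℕ) j, d (σ^[m] j) = d j := by
    intro m
    induction m with
    | zero => intro j; rfl
    | succ m ih =>
        intro j
        rw [Function.iterate_succ_apply' σ, (hstep (σ^[m] j)).2, ih j]
  refine ⟨fun j => ⟨σ j, himg j⟩, ?_, ?_, ?_⟩
  · intro j j'
    obtain ⟨m, hm⟩ := horb j j'
    exact ⟨m, by rw [hiter m j, hm]⟩
  · intro j j'
    obtain ⟨m, hm⟩ := horb j j'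
    rw [← hm, hiter_n m j]
  · intro j j' a b
    rw [hd j a, hd j' b]
    obtain ⟨m, hm⟩ := horb j j'
    rw [← hm, hiter_d m j]
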